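/- If L = L₁ ⊕ L₂ is a direct sum of finite-dimensional Lie algebras, then b(L) = b(L₁) + b(L₂), where b denotes the breadth. -/
import Mathlib


open Module

/-- The breadth of an element `x`: the rank of `ad x`. -/
noncomputable def elemBreadth (F : Type*) {L : Type*} [Field F] [LieRing L] [LieAlgebra F L]
    (x : L) : ℕ :=
  finrank F (LinearMap.range (LieAlgebra.ad F L x))

/-- `L` has breadth `n`: `n` is the maximum of the ranks of the maps `ad x`, `x ∈ L`. -/
def HasBreadth (F L : Type*) [Field F] [LieRing L] [LieAlgebra F L] (n : ℕ) : Prop :=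
  (∀ x : L, elemBreadth F x ≤ n) ∧ ∃ x : L, elemBreadth F x = n

section Aux

variable {F : Type*} [Field F] {ι : Type*} [Fintype ι] [DecidableEq ι]
  {M : ι → Type*} [∀ i, AddCommGroup (M i)] [∀ i, Module F (M i)]

/-- The range of a componentwise map on a product is linearly equivalent to the
product of the ranges. -/
noncomputable def rangePiEquiv (f : ∀ i, M i →ₗ[F] M i) :
    LinearMap.range (LinearMap.pi fun i => (f i).comp (LinearMap.proj i)) ≃ₗ[F]
      ∀ i, LinearMap.range (f i) := by
  have hmem : ∀ y : LinearMap.range (LinearMap.pi fun i => (f i).comp (LinearMap.proj i)),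
      ∀ i, y.1 i ∈ LinearMap.range (f i) := by
    rintro ⟨_, v, rfl⟩ i
    exact ⟨v i, rfl⟩
  refine LinearEquiv.ofBijective
    { toFun := fun y => fun i => ⟨y.1 i, hmem y i⟩
      map_add' := fun y z => by ext i; rfl
      map_smul' := fun c y => by ext i; rfl } ⟨?_, ?_⟩
  · intro y z h
    apply Subtype.ext
    funext i
    exact congrArg Subtype.val (congrFun h i)
  · intro z
    choose w hw using fun i => (z i).2
    refine ⟨⟨_, LinearMap.mem_range_self _ w⟩, ?_⟩
    funext i
    exact Subtype.ext (hw i)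

lemma finrank_range_pi [∀ i, FiniteDimensional F (M i)] (f : ∀ i, M i →ₗ[F] M i) :
    finrank F (LinearMap.range (LinearMap.pi fun i => (f i).comp (LinearMap.proj i))) =
      ∑ i, finrank F (LinearMap.range (f i)) := by
  rw [(rangePiEquiv f).finrank_eq, Module.finrank_pi_fintype]

end Aux

open DirectSum in
lemma elemBreadth_directSum {F : Type*} [Field F] {ι : Type*} [Fintype ι] [DecidableEq ι]
    (Ls : ι → Type*) [∀ i, LieRing (Ls i)] [∀ i, LieAlgebra F (Ls i)]
    [∀ i, FiniteDimensional F (Ls i)] (x : ⨁ i, Ls i) :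
    elemBreadth F x = ∑ i, elemBreadth F (x i) := by
  classical
  set e := DirectSum.linearEquivFunOnFintype F ι Ls with he
  have hcoe : ∀ d : ⨁ i, Ls i, ∀ i, e d i = d i := fun d i => rfl
  have hconj : e.toLinearMap ∘ₗ (LieAlgebra.ad F (⨁ i, Ls i) x) ∘ₗ e.symm.toLinearMap =
      LinearMap.pi fun i => (LieAlgebra.ad F (Ls i) (x i)).comp (LinearMap.proj i) := by
    apply LinearMap.ext
    intro v
    funext i
    have h1 : (e.symm v : ⨁ i, Ls i) i = v i := by
      have := congrFun (congrArg (fun d : ⨁ i, Ls i => (⇑d : ∀ i, Ls i)) rfl :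
        (⇑(e.symm v) : ∀ i, Ls i) = ⇑(e.symm v)) i
      -- use e (e.symm v) = v
      have h2 : e (e.symm v) = v := e.apply_symm_apply v
      calc (e.symm v : ⨁ i, Ls i) i = e (e.symm v) i := (hcoe _ i).symm
        _ = v i := by rw [h2]
    simp only [LinearMap.comp_apply, LinearEquiv.coe_coe, LinearMap.pi_apply,
      LinearMap.proj_apply]
    rw [hcoe]
    show (⁅x, e.symm v⁆ : ⨁ i, Ls i) i = LieAlgebra.ad F (Ls i) (x i) (v i)
    rw [DirectSum.bracket_apply, h1]
    rfl
  have hrange : finrank F (LinearMap.range (LieAlgebra.ad F (⨁ i, Ls i) x)) =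
      finrank F (LinearMap.range
        (e.toLinearMap ∘ₗ (LieAlgebra.ad F (⨁ i, Ls i) x) ∘ₗ e.symm.toLinearMap)) := by
    rw [LinearMap.range_comp, LinearMap.range_comp, LinearEquiv.range, Submodule.map_top,
      LinearEquiv.finrank_map_eq]
  unfold elemBreadth
  rw [hrange, hconj, finrank_range_pi]

open DirectSum in
theorem stmt6 (F : Type*) [Field F] (Ls : Fin 2 → Type*)
    [∀ i, LieRing (Ls i)] [∀ i, LieAlgebra F (Ls i)]
    [∀ i, FiniteDimensional F (Ls i)] (m n : ℕ)
    (h1 : HasBreadth F (Ls 0) m) (h2 : HasBreadth F (Ls 1) n) :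
    HasBreadth F (⨁ i, Ls i) (m + n) := by
  constructor
  · intro x
    rw [elemBreadth_directSum Ls x, Fin.sum_univ_two]
    exact Nat.add_le_add (h1.1 (x 0)) (h2.1 (x 1))
  · obtain ⟨x0, hx0⟩ := h1.2
    obtain ⟨x1, hx1⟩ := h2.2
    refine ⟨DirectSum.lof F (Fin 2) Ls 0 x0 + DirectSum.lof F (Fin 2) Ls 1 x1, ?_⟩
    rw [elemBreadth_directSum Ls, Fin.sum_univ_two]
    have h0 : (DirectSum.lof F (Fin 2) Ls 0 x0 + DirectSum.lof F (Fin 2) Ls 1 x1) 0 = x0 := by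
      simp [DirectSum.lof_eq_of, DirectSum.of_eq_same, DirectSum.of_eq_of_ne]
    have h1' : (DirectSum.lof F (Fin 2) Ls 0 x0 + DirectSum.lof F (Fin 2) Ls 1 x1) 1 = x1 := by
      simp [DirectSum.lof_eq_of, DirectSum.of_eq_same, DirectSum.of_eq_of_ne]
    rw [h0, h1', hx0, hx1]
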